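/- arXiv:1603.01635 — 7 statements merged into one kernel-verified Lean document; each statement's English description precedes it below -/
import Mathlib

section
/- The restricted inverse cleans ancillas (uncompute correctness): let C be a well-formed reversible circuit and A a set of bit indices such that A ∩ controls(C) = ∅. Let uncompute(C, A) be obtained by reversing the gates of C and deleting every gate whose target lies in A. Then for every state s and every index i ∉ A, (eval (C ++ uncompute(C, A)) s)(i) = s(i). -/
inductive BExp where
  | bfalse : BExp
  | btrue : BExp
  | var (i : ℕ) : BExp
  | bxor (a b : BExp) : BExp
  | band (a b : BExp) : BExp

def BExp.eval : BExp → (ℕ → Bool) → Bool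
  | .bfalse, _ => false
  | .btrue, _ => true
  | .var i, s => s i
  | .bxor a b, s => xor (a.eval s) (b.eval s)
  | .band a b, s => (a.eval s) && (b.eval s)

def BExp.vars : BExp → Finset ℕ
  | .bfalse => ∅
  | .btrue => ∅
  | .var i => {i}
  | .bxor a b => a.vars ∪ b.vars
  | .band a b => a.vars ∪ b.vars

inductive Gate where
  | NOT (i : ℕ) : Gate
  | CNOT (i j : ℕ) : Gate
  | TOF (i j k : ℕ) : Gate

def applyGate : Gate → (ℕ → Bool) → (ℕ → Bool)
  | .NOT i, s => Function.update s i (! s i)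
  | .CNOT i j, s => Function.update s j (xor (s i) (s j))
  | .TOF i j k, s => Function.update s k (xor (s i && s j) (s k))

def evalCirc : List Gate → (ℕ → Bool) → (ℕ → Bool)
  | [], s => s
  | g :: C, s => evalCirc C (applyGate g s)

def Gate.target : Gate → ℕ
  | .NOT i => i
  | .CNOT _ j => j
  | .TOF _ _ k => k

def Gate.controls : Gate → Finset ℕ
  | .NOT _ => ∅
  | .CNOT i _ => {i}
  | .TOF i j _ => {i, j}

def Gate.wf : Gate → Prop
  | .NOT _ => True
  | .CNOT i j => i ≠ j
  | .TOF i j k => i ≠ j ∧ i ≠ k ∧ j ≠ k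

def circWf (C : List Gate) : Prop := ∀ g ∈ C, g.wf

def mods (C : List Gate) : Finset ℕ := (C.map Gate.target).toFinset

def controls (C : List Gate) : Finset ℕ := C.foldr (fun g A => g.controls ∪ A) ∅

def uncompute (C : List Gate) (A : Finset ℕ) : List Gate :=
  C.filter (fun g => g.target ∉ A)


lemma evalCirc_append (C D : List Gate) (s : ℕ → Bool) :
    evalCirc (C ++ D) s = evalCirc D (evalCirc C s) := by
  induction C generalizing s with
  | nil => rfl
  | cons g C ih => simp [evalCirc, ih]

lemma gate_uncompute (g : Gate) (hwf : g.wf) (A : Finset ℕ)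
    (hct : ∀ j ∈ g.controls, j ∉ A) (ht : g.target ∉ A)
    (u s : ℕ → Bool) (hu : ∀ j ∉ A, u j = applyGate g s j)
    (i : ℕ) (hi : i ∉ A) : applyGate g u i = s i := by
  cases g with
  | NOT t =>
    by_cases h : i = t
    · subst h
      have := hu i hi
      simp [applyGate, Function.update_self] at this ⊢
      simp [this]
    · have := hu i hi
      simp [applyGate, Function.update_of_ne h] at this ⊢
      simp [this]
  | CNOT c t =>
    have hc : c ∉ A := hct c (by simp [Gate.controls])
    have hcu : u c = s c := by
      have := hu c hc
      simp [applyGate, Function.update_of_ne hwf] at this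
      exact this
    by_cases h : i = t
    · subst h
      have := hu i hi
      simp [applyGate, Function.update_self] at this ⊢
      simp [this, hcu]
    · have := hu i hi
      simp [applyGate, Function.update_of_ne h] at this ⊢
      simp [this]
  | TOF a b t =>
    obtain ⟨hab, hat, hbt⟩ := hwf
    have ha : a ∉ A := hct a (by simp [Gate.controls])
    have hb : b ∉ A := hct b (by simp [Gate.controls])
    have hau : u a = s a := by
      have := hu a ha
      simp [applyGate, Function.update_of_ne hat] at this
      exact this
    have hbu : u b = s b := by
      have := hu b hb
      simp [applyGate, Function.update_of_ne hbt] at this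
      exact this
    by_cases h : i = t
    · subst h
      have := hu i hi
      simp [applyGate, Function.update_self] at this ⊢
      simp [this, hau, hbu]
    · have := hu i hi
      simp [applyGate, Function.update_of_ne h] at this ⊢
      simp [this]

theorem uncompute_correct (C : List Gate) (A : Finset ℕ) (hC : circWf C)
    (hA : ∀ i ∈ A, i ∉ controls C) (s : ℕ → Bool) (i : ℕ) (hi : i ∉ A) :
    evalCirc (C ++ (uncompute C A).reverse) s i = s i := by
  induction C generalizing s i hi with
  | nil => rfl
  | cons g C ih =>
    have hCwf : circWf C := fun g' hg' => hC g' (List.mem_cons_of_mem _ hg')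
    have hgwf : g.wf := hC g List.mem_cons_self
    have hctl : ∀ j ∈ A, j ∉ controls C := by
      intro j hj hjc
      exact hA j hj (by simp [controls] at hjc ⊢; exact Or.inr hjc)
    have hgc : ∀ j ∈ g.controls, j ∉ A := by
      intro j hjg hjA
      exact hA j hjA (by simp [controls]; exact Or.inl hjg)
    by_cases ht : g.target ∈ A
    · have hfil : uncompute (g :: C) A = uncompute C A := by
        simp [uncompute, List.filter_cons, ht]
      rw [hfil]
      have : evalCirc (g :: C ++ (uncompute C A).reverse) s
          = evalCirc (C ++ (uncompute C A).reverse) (applyGate g s) := rfl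
      rw [this, ih hCwf hctl _ _ hi]
      have hne : i ≠ g.target := fun h => hi (h ▸ ht)
      cases g with
      | NOT t => exact Function.update_of_ne hne _ _
      | CNOT c t => exact Function.update_of_ne hne _ _
      | TOF a b t => exact Function.update_of_ne hne _ _
    · have hfil : uncompute (g :: C) A = g :: uncompute C A := by
        simp [uncompute, List.filter_cons, ht]
      rw [hfil, List.reverse_cons]
      have h1 : evalCirc (g :: C ++ ((uncompute C A).reverse ++ [g])) s
          = evalCirc [g] (evalCirc (C ++ (uncompute C A).reverse) (applyGate g s)) := by
        show evalCirc (C ++ ((uncompute C A).reverse ++ [g])) (applyGate g s) = _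
        rw [← List.append_assoc, evalCirc_append]
      rw [h1]
      show applyGate g (evalCirc (C ++ (uncompute C A).reverse) (applyGate g s)) i = s i
      exact gate_uncompute g hgwf A hgc ht _ s
        (fun j hj => ih hCwf hctl (applyGate g s) j hj) i hi
end

section
/- The uncompute transformation agrees with the full inverse on the complement of the removed set: if C is well-formed and controls(C) is disjoint from A, then for all states s, the states eval C s and eval (uncompute(C, A)) s agree on all indices not in A, where uncompute(C, A) removes from C every gate whose target lies in A (without reversing). -/
lemma controls_cons (g : Gate) (C : List Gate) :
    controls (g :: C) = g.controls ∪ controls C := rfl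

lemma uncompute_aux (C : List Gate) (A : Finset ℕ)
    (hA : ∀ i ∈ A, i ∉ controls C) (s t : ℕ → Bool)
    (h : ∀ i ∉ A, s i = t i) : ∀ i ∉ A, evalCirc C s i = evalCirc (uncompute C A) t i := by
  induction C generalizing s t with
  | nil => exact fun i hi => h i hi
  | cons g C ih =>
    have hA' : ∀ i ∈ A, i ∉ controls C := by
      intro i hi hc
      exact hA i hi (by rw [controls_cons]; exact Finset.mem_union_right _ hc)
    have hAg : ∀ i ∈ A, i ∉ g.controls := by
      intro i hi hc
      exact hA i hi (by rw [controls_cons]; exact Finset.mem_union_left _ hc)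
    by_cases htg : g.target ∈ A
    · have hfilt : uncompute (g :: C) A = uncompute C A := by
        simp [uncompute, htg]
      rw [hfilt]
      intro i hi
      have h' : ∀ j ∉ A, applyGate g s j = t j := by
        intro j hj
        have hne : j ≠ g.target := fun e => hj (e ▸ htg)
        cases g with
        | NOT a => rw [show Gate.target (.NOT a) = a from rfl] at hne
                   simpa [applyGate, Function.update_of_ne hne] using h j hj
        | CNOT a b => rw [show Gate.target (.CNOT a b) = b from rfl] at hne
                      simpa [applyGate, Function.update_of_ne hne] using h j hj
        | TOF a b c => rw [show Gate.target (.TOF a b c) = c from rfl] at hne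
                       simpa [applyGate, Function.update_of_ne hne] using h j hj
      exact ih hA' _ _ h' i hi
    · have hfilt : uncompute (g :: C) A = g :: uncompute C A := by
        simp [uncompute, htg]
      rw [hfilt]
      intro i hi
      have h' : ∀ j ∉ A, applyGate g s j = applyGate g t j := by
        intro j hj
        cases g with
        | NOT a =>
          have ha : s a = t a := h a htg
          simp only [applyGate]
          by_cases hja : j = a
          · subst hja; simp [ha]
          · simp [Function.update_of_ne hja, h j hj]
        | CNOT a b =>
          have haA : a ∉ A := fun hm => hAg a hm (by simp [Gate.controls])
          have hb : s b = t b := h b htg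
          have ha : s a = t a := h a haA
          simp only [applyGate]
          by_cases hjb : j = b
          · subst hjb; simp [ha, hb]
          · simp [Function.update_of_ne hjb, h j hj]
        | TOF a b c =>
          have haA : a ∉ A := fun hm => hAg a hm (by simp [Gate.controls])
          have hbA : b ∉ A := fun hm => hAg b hm (by simp [Gate.controls])
          have hc : s c = t c := h c htg
          have ha : s a = t a := h a haA
          have hb : s b = t b := h b hbA
          simp only [applyGate]
          by_cases hjc : j = c
          · subst hjc; simp [ha, hb, hc]
          · simp [Function.update_of_ne hjc, h j hj]
      simpa [evalCirc] using ih hA' _ _ h' i hi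

theorem uncompute_agree (C : List Gate) (A : Finset ℕ) (hC : circWf C)
    (hA : ∀ i ∈ A, i ∉ controls C) (s : ℕ → Bool) (i : ℕ) (hi : i ∉ A) :
    evalCirc C s i = evalCirc (uncompute C A) s i :=
  uncompute_aux C A hA s s (fun _ _ => rfl) i hi
end

section
/- Compiled circuits do not modify bits outside the target, popped ancillas, and no bit of vars(B): if C = compile(B, i) with ancilla heap H and vars(B), H, {i} pairwise disjoint, then every bit modified by C is either i or an ancilla popped from H during compilation; in particular, bits remaining on the heap and bits in vars(B) retain their values under eval C. -/
/-- The ancilla heap is modeled as an infinite supply of available (zero-valued)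
ancilla indices: `H n` is the `n`-th ancilla on the heap.  Popping the heap
returns `H 0` and the remaining heap `fun n => H (n+1)`. -/
def compileBExp : BExp → ℕ → (ℕ → ℕ) → List Gate × (ℕ → ℕ)
  | .bfalse, _, H => ([], H)
  | .btrue, i, H => ([.NOT i], H)
  | .var j, i, H => ([.CNOT j i], H)
  | .bxor a b, i, H =>
    let r1 := compileBExp a i H
    let r2 := compileBExp b i r1.2
    (r1.1 ++ r2.1, r2.2)
  | .band a b, i, H =>
    let a1 := H 0
    let r1 := compileBExp a a1 (fun n => H (n+1))
    let a2 := r1.2 0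
    let r2 := compileBExp b a2 (fun n => r1.2 (n+1))
    (r1.1 ++ r2.1 ++ [.TOF a1 a2 i], r2.2)

lemma heap_shift (B : BExp) : ∀ (i : ℕ) (H : ℕ → ℕ), ∃ k, ∀ n, (compileBExp B i H).2 n = H (n + k) := by
  induction B with
  | bfalse => exact fun i H => ⟨0, fun n => rfl⟩
  | btrue => exact fun i H => ⟨0, fun n => rfl⟩
  | var j => exact fun i H => ⟨0, fun n => rfl⟩
  | bxor a b iha ihb =>
    intro i H
    obtain ⟨k1, h1⟩ := iha i H
    obtain ⟨k2, h2⟩ := ihb i (compileBExp a i H).2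
    exact ⟨k2 + k1, fun n => by simp only [compileBExp]; rw [h2, h1]; ring_nf⟩
  | band a b iha ihb =>
    intro i H
    obtain ⟨k1, h1⟩ := iha (H 0) (fun n => H (n+1))
    obtain ⟨k2, h2⟩ := ihb ((compileBExp a (H 0) fun n => H (n+1)).2 0)
      (fun n => (compileBExp a (H 0) fun n => H (n+1)).2 (n+1))
    refine ⟨k2 + 1 + k1 + 1, fun n => ?_⟩
    simp only [compileBExp]
    rw [h2, h1]
    ring_nf

lemma evalCirc_skip (C : List Gate) : ∀ (s : ℕ → Bool) (j : ℕ), j ∉ mods C → evalCirc C s j = s j := by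
  induction C with
  | nil => intro s j _; rfl
  | cons g C ih =>
    intro s j hj
    simp only [mods, List.map_cons, List.toFinset_cons, Finset.mem_insert, List.mem_toFinset,
      not_or] at hj
    rw [evalCirc, ih _ j (by simp [mods, hj.2])]
    cases g <;> simp only [applyGate] <;> rw [Function.update_of_ne] <;>
      simpa [Gate.target] using hj.1

lemma mods_append (C1 C2 : List Gate) : mods (C1 ++ C2) = mods C1 ∪ mods C2 := by
  simp [mods]

lemma compile_mods_aux (B : BExp) : ∀ (i : ℕ) (H : ℕ → ℕ), Function.Injective H →
    (↑(mods (compileBExp B i H).1) : Set ℕ) ⊆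
      insert i (Set.range H \ Set.range (compileBExp B i H).2) := by
  induction B with
  | bfalse => intro i H _; simp [compileBExp, mods]
  | btrue => intro i H _; simp [compileBExp, mods, Gate.target]
  | var j => intro i H _; simp [compileBExp, mods, Gate.target]
  | bxor a b iha ihb =>
    intro i H hinj
    obtain ⟨k1, h1⟩ := heap_shift a i H
    obtain ⟨k2, h2⟩ := heap_shift b i (compileBExp a i H).2
    have hinj1 : Function.Injective (compileBExp a i H).2 := by
      intro x y hxy; rw [h1, h1] at hxy; have := hinj hxy; omega
    have ha := iha i H hinj
    have hb := ihb i (compileBExp a i H).2 hinj1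
    simp only [compileBExp, mods_append, Finset.coe_union]
    rintro x (hx | hx)
    · rcases ha hx with h | ⟨⟨n, hn⟩, hnr⟩
      · exact Or.inl h
      · refine Or.inr ⟨⟨n, hn⟩, ?_⟩
        rintro ⟨m, hm⟩
        exact hnr ⟨m + k2, by rw [← h2]; exact hm⟩
    · rcases hb hx with h | ⟨⟨n, hn⟩, hnr⟩
      · exact Or.inl h
      · refine Or.inr ⟨⟨n + k1, by rw [← h1]; exact hn⟩, hnr⟩
  | band a b iha ihb =>
    intro i H hinj
    set H' : ℕ → ℕ := fun n => H (n+1) with hH'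
    obtain ⟨k1, h1⟩ := heap_shift a (H 0) H'
    set H1 := (compileBExp a (H 0) H').2 with hH1
    set a2 := H1 0 with ha2
    set H'' : ℕ → ℕ := fun n => H1 (n+1) with hH''
    obtain ⟨k2, h2⟩ := heap_shift b a2 H''
    set H2 := (compileBExp b a2 H'').2 with hH2
    have e1 : ∀ n, H1 n = H (n + 1 + k1) := fun n => by
      rw [h1]; show H (n + k1 + 1) = _; congr 1; omega
    have e2 : ∀ n, H2 n = H (n + k2 + 1 + 1 + k1) := fun n => by
      rw [h2]; show H1 (n + k2 + 1) = _; rw [e1]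
    have hinj' : Function.Injective H' := by
      intro x y hxy; have := hinj hxy; omega
    have hinj'' : Function.Injective H'' := by
      intro x y hxy; simp only [hH''] at hxy; rw [e1, e1] at hxy
      have := hinj hxy; omega
    have ha := iha (H 0) H' hinj'
    have hb := ihb a2 H'' hinj''
    show (↑(mods ((compileBExp a (H 0) H').1 ++ (compileBExp b a2 H'').1 ++
        [Gate.TOF (H 0) a2 i])) : Set ℕ) ⊆ insert i (Set.range H \ Set.range H2)
    have hnotH2 : ∀ m j, j + k2 + 1 + 1 + k1 ≠ m → H m ∉ Set.range H2 → True := fun _ _ _ _ => trivial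
    simp only [mods_append, Finset.coe_union]
    rintro x ((hx | hx) | hx)
    · rcases ha hx with h | ⟨⟨n, hn⟩, hnr⟩
      · -- x = H 0
        refine Or.inr ⟨⟨0, h.symm⟩, ?_⟩
        rintro ⟨m, hm⟩
        rw [e2] at hm; rw [h] at hm
        have := hinj hm; omega
      · -- x ∈ range H' \ range H1
        refine Or.inr ⟨⟨n + 1, hn⟩, ?_⟩
        rintro ⟨m, hm⟩
        exact hnr ⟨m + k2 + 1, by show H1 (m + k2 + 1) = x; rw [e1, ← e2]; exact hm⟩
    · rcases hb hx with h | ⟨⟨n, hn⟩, hnr⟩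
      · -- x = a2 = H1 0
        refine Or.inr ⟨⟨0 + 1 + k1, by rw [← e1]; exact h.symm⟩, ?_⟩
        rintro ⟨m, hm⟩
        rw [e2] at hm
        have h' : H (m + k2 + 1 + 1 + k1) = H (0 + 1 + k1) := by
          rw [hm, h, ha2]; exact e1 0
        have := hinj h'; omega
      · refine Or.inr ⟨⟨n + 1 + 1 + k1, ?_⟩, hnr⟩
        rw [← e1 (n + 1)]; exact hn
    · -- the TOF gate: target i
      simp only [mods, List.map_cons, List.map_nil, List.toFinset_cons, List.toFinset_nil,
        Gate.target, Finset.coe_insert] at hx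
      simp at hx
      exact Or.inl hx

theorem compile_mods (B : BExp) (i : ℕ) (H : ℕ → ℕ)
    (hinj : Function.Injective H)
    (hHB : ∀ n, H n ∉ B.vars) (hHi : ∀ n, H n ≠ i) (hiB : i ∉ B.vars) :
    (↑(mods (compileBExp B i H).1) : Set ℕ) ⊆
      insert i (Set.range H \ Set.range (compileBExp B i H).2) ∧
    (∀ (s : ℕ → Bool) (j : ℕ),
      (j ∈ Set.range (compileBExp B i H).2 ∨ j ∈ B.vars) →
      evalCirc (compileBExp B i H).1 s j = s j) := by
  constructor
  · exact compile_mods_aux B i H hinj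
  · intro s j hj
    obtain ⟨k, hk⟩ := heap_shift B i H
    apply evalCirc_skip
    intro hmem
    rcases compile_mods_aux B i H hinj (Finset.mem_coe.mpr hmem) with h | ⟨⟨n, hn⟩, hnr⟩
    · rcases hj with ⟨m, hm⟩ | hv
      · rw [hk] at hm; exact hHi (m + k) (hm.trans h)
      · rw [h] at hv; exact hiB hv
    · rcases hj with hm | hv
      · exact hnr hm
      · exact hHB n (hn ▸ hv)
end

section
/- The controls of a compiled circuit are contained in the variables of the expression and the popped ancillas: if C = compile(B, i) with ancilla heap H, then every control bit of C lies in vars(B) ∪ (ancillas popped from H); in particular, the target i is never used as a control. -/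
lemma controls_append (C1 C2 : List Gate) :
    controls (C1 ++ C2) = controls C1 ∪ controls C2 := by
  induction C1 with
  | nil => simp [controls]
  | cons g C ih =>
      simp only [List.cons_append, controls, List.foldr_cons] at ih ⊢
      rw [ih, Finset.union_assoc]

lemma compile_heap (B : BExp) : ∀ i H, ∃ k, (compileBExp B i H).2 = fun n => H (n + k) := by
  induction B with
  | bfalse => exact fun i H => ⟨0, rfl⟩
  | btrue => exact fun i H => ⟨0, rfl⟩
  | var j => exact fun i H => ⟨0, rfl⟩
  | bxor a b iha ihb =>
      intro i H
      obtain ⟨k1, h1⟩ := iha i H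
      obtain ⟨k2, h2⟩ := ihb i (compileBExp a i H).2
      refine ⟨k1 + k2, ?_⟩
      show (compileBExp b i (compileBExp a i H).2).2 = _
      rw [h2, h1]
      funext n
      show H (n + k2 + k1) = H (n + (k1 + k2))
      congr 1; omega
  | band a b iha ihb =>
      intro i H
      obtain ⟨k1, h1⟩ := iha (H 0) (fun n => H (n+1))
      obtain ⟨k2, h2⟩ := ihb ((compileBExp a (H 0) (fun n => H (n+1))).2 0)
        (fun n => (compileBExp a (H 0) (fun n => H (n+1))).2 (n+1))
      refine ⟨k1 + k2 + 2, ?_⟩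
      show (compileBExp b _ _).2 = _
      rw [h2]
      funext n
      have : (compileBExp a (H 0) (fun n => H (n+1))).2 (n + k2 + 1) = H (n + k2 + 1 + k1 + 1) := by
        rw [h1]
      rw [this]; congr 1; omega

theorem compile_ctrls (B : BExp) (i : ℕ) (H : ℕ → ℕ)
    (hinj : Function.Injective H)
    (hHB : ∀ n, H n ∉ B.vars) (hHi : ∀ n, H n ≠ i) (hiB : i ∉ B.vars) :
    (↑(controls (compileBExp B i H).1) : Set ℕ) ⊆
      ↑B.vars ∪ (Set.range H \ Set.range (compileBExp B i H).2) ∧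
    i ∉ controls (compileBExp B i H).1 := by induction B generalizing i H with
  | bfalse => simp [compileBExp, controls]
  | btrue => simp [compileBExp, controls, Gate.controls]
  | bxor a b iha ihb =>
      have hHa : ∀ n, H n ∉ a.vars := fun n h => hHB n (Finset.mem_union_left _ h)
      have hHb : ∀ n, H n ∉ b.vars := fun n h => hHB n (Finset.mem_union_right _ h)
      have hia : i ∉ a.vars := fun h => hiB (Finset.mem_union_left _ h)
      have hib : i ∉ b.vars := fun h => hiB (Finset.mem_union_right _ h)
      obtain ⟨k1, hk1⟩ := compile_heap a i H
      have hinj1 : Function.Injective (compileBExp a i H).2 := by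
        rw [hk1]; intro x y hxy; have := hinj hxy; omega
      have hrange1 : Set.range (compileBExp a i H).2 ⊆ Set.range H := by
        rw [hk1]; rintro x ⟨n, rfl⟩; exact ⟨n + k1, rfl⟩
      obtain ⟨k2, hk2⟩ := compile_heap b i (compileBExp a i H).2
      have hrange2 : Set.range (compileBExp b i (compileBExp a i H).2).2 ⊆
          Set.range (compileBExp a i H).2 := by
        rw [hk2]; rintro x ⟨n, rfl⟩; exact ⟨n + k2, rfl⟩
      have h1 := iha i H hinj hHa hHi hia
      have h2 := ihb i (compileBExp a i H).2 hinj1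
        (fun n => by rw [hk1]; exact hHb _)
        (fun n => by rw [hk1]; exact hHi _) hib
      have hC : (compileBExp (.bxor a b) i H).1 =
          (compileBExp a i H).1 ++ (compileBExp b i (compileBExp a i H).2).1 := rfl
      have hS : (compileBExp (.bxor a b) i H).2 =
          (compileBExp b i (compileBExp a i H).2).2 := rfl
      rw [hC, hS, controls_append]
      constructor
      · intro x hx
        rw [Finset.coe_union, Set.mem_union] at hx
        rcases hx with hx | hx
        · rcases h1.1 hx with h | ⟨hr, hnr⟩
          · exact Or.inl (by simpa [BExp.vars] using Finset.mem_union_left _ (by simpa using h))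
          · exact Or.inr ⟨hr, fun h => hnr (hrange2 h)⟩
        · rcases h2.1 hx with h | ⟨hr, hnr⟩
          · exact Or.inl (by simpa [BExp.vars] using Finset.mem_union_right _ (by simpa using h))
          · exact Or.inr ⟨hrange1 hr, hnr⟩
      · rw [Finset.mem_union]
        rintro (h | h)
        · exact h1.2 h
        · exact h2.2 h
  | var j =>
      constructor
      · intro x hx
        simp only [compileBExp, controls, List.foldr, Gate.controls, Finset.union_empty,
          Finset.coe_singleton, Set.mem_singleton_iff] at hx
        subst hx
        exact Or.inl (by simp [BExp.vars])
      · intro h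
        simp only [compileBExp, controls, List.foldr, Gate.controls, Finset.union_empty,
          Finset.mem_singleton] at h
        exact hiB (by simp [BExp.vars, h])
  | band a b iha ihb =>
      have hHa : ∀ n, H n ∉ a.vars := fun n h => hHB n (Finset.mem_union_left _ h)
      have hHb : ∀ n, H n ∉ b.vars := fun n h => hHB n (Finset.mem_union_right _ h)
      have hia : i ∉ a.vars := fun h => hiB (Finset.mem_union_left _ h)
      have hib : i ∉ b.vars := fun h => hiB (Finset.mem_union_right _ h)
      set Hs : ℕ → ℕ := fun n => H (n+1) with hHs
      obtain ⟨k1, hk1⟩ := compile_heap a (H 0) Hs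
      set r1 := compileBExp a (H 0) Hs with hr1
      have hr1n : ∀ n, r1.2 n = H (n + k1 + 1) := fun n => by rw [hk1]
      set Hs2 : ℕ → ℕ := fun n => r1.2 (n+1) with hHs2
      have hHs2n : ∀ n, Hs2 n = H (n + k1 + 2) := fun n => by
        show r1.2 (n+1) = _; rw [hr1n]; congr 1; omega
      obtain ⟨k2, hk2⟩ := compile_heap b (r1.2 0) Hs2
      set r2 := compileBExp b (r1.2 0) Hs2 with hr2
      have hr2n : ∀ n, r2.2 n = H (n + k2 + k1 + 2) := fun n => by
        rw [hk2]; show Hs2 (n + k2) = _; rw [hHs2n]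
      have ha2 : r1.2 0 = H (k1 + 1) := by rw [hr1n]; congr 1; omega
      have h1 := iha (H 0) Hs
        (fun x y hxy => by have := hinj hxy; omega)
        (fun n => hHa (n+1))
        (fun n h => by have := hinj h; omega)
        (hHa 0)
      have h2 := ihb (r1.2 0) Hs2
        (fun x y hxy => by
          rw [hHs2n, hHs2n] at hxy; have := hinj hxy; omega)
        (fun n => by rw [hHs2n]; exact hHb _)
        (fun n h => by rw [hHs2n, ha2] at h; have := hinj h; omega)
        (by rw [ha2]; exact hHb _)
      have hC : (compileBExp (.band a b) i H).1 =
          r1.1 ++ r2.1 ++ [.TOF (H 0) (r1.2 0) i] := rfl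
      have hS : (compileBExp (.band a b) i H).2 = r2.2 := rfl
      have hnr2 : ∀ m, H m ∉ Set.range r2.2 → ∀ x ∈ Set.range r2.2, H m ≠ x := by
        rintro m hm x ⟨n, rfl⟩ h; exact hm ⟨n, h.symm⟩
      have hrr : Set.range r2.2 ⊆ Set.range r1.2 := by
        rintro x ⟨n, rfl⟩; rw [hr2n]
        exact ⟨n + k2 + 1, by rw [hr1n]; congr 1; omega⟩
      have hrH : Set.range r2.2 ⊆ Set.range H := by
        rintro x ⟨n, rfl⟩; rw [hr2n]; exact ⟨_, rfl⟩
      have htof : controls [Gate.TOF (H 0) (r1.2 0) i] = {H 0, r1.2 0} := by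
        simp [controls, Gate.controls]
      rw [hC, hS, controls_append, controls_append, htof]
      have ha1nr : H 0 ∉ Set.range r2.2 := by
        rintro ⟨n, hn⟩; rw [hr2n] at hn; have := hinj hn; omega
      have ha2nr : r1.2 0 ∉ Set.range r2.2 := by
        rintro ⟨n, hn⟩; rw [hr2n, ha2] at hn; have := hinj hn; omega
      constructor
      · intro x hx
        rw [Finset.coe_union, Finset.coe_union, Set.mem_union, Set.mem_union] at hx
        rcases hx with (hx | hx) | hx
        · rcases h1.1 hx with h | ⟨⟨n, hn⟩, hnr⟩
          · exact Or.inl (by simpa [BExp.vars] using Finset.mem_union_left _ (by simpa using h))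
          · exact Or.inr ⟨⟨n+1, hn⟩, fun h => hnr (hrr h)⟩
        · rcases h2.1 hx with h | ⟨⟨n, hn⟩, hnr⟩
          · exact Or.inl (by simpa [BExp.vars] using Finset.mem_union_right _ (by simpa using h))
          · refine Or.inr ⟨?_, hnr⟩
            rw [← hn, hHs2n]; exact ⟨_, rfl⟩
        · simp only [Finset.coe_insert, Finset.coe_singleton, Set.mem_insert_iff,
            Set.mem_singleton_iff] at hx
          rcases hx with rfl | rfl
          · exact Or.inr ⟨⟨0, rfl⟩, ha1nr⟩
          · exact Or.inr ⟨by rw [ha2]; exact ⟨_, rfl⟩, ha2nr⟩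
      · rw [Finset.mem_union, Finset.mem_union]
        rintro ((h | h) | h)
        · rcases h1.1 (Finset.mem_coe.mpr h) with hh | ⟨⟨n, hn⟩, _⟩
          · exact hia (by simpa using hh)
          · exact hHi (n+1) hn
        · rcases h2.1 (Finset.mem_coe.mpr h) with hh | ⟨⟨n, hn⟩, _⟩
          · exact hib (by simpa using hh)
          · rw [hHs2n] at hn; exact hHi _ hn
        · rw [Finset.mem_insert, Finset.mem_singleton] at h
          rcases h with h | h
          · exact hHi 0 h.symm
          · rw [ha2] at h; exact hHi _ h.symm
end

section
/- Compile-with-cleanup correctness: let C = compile(B, i) with ancilla heap H, where vars(B), H, {i} are pairwise disjoint and all heap bits are false in state s. Let C' = C ++ reverse(uncompute(C, {i})), where uncompute(C, {i}) removes gates targeting i. Then for every bit j ≠ i, (eval C' s)(j) = s(j); moreover (eval C' s)(i) = s(i) XOR eval B s, and all ancillas popped during compilation are restored to false. -/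
/-! ### Auxiliary lemmas -/

def anc : BExp → ℕ
  | .bfalse => 0
  | .btrue => 0
  | .var _ => 0
  | .bxor a b => anc a + anc b
  | .band a b => anc a + anc b + 2

lemma compile_snd (B : BExp) (i : ℕ) (H : ℕ → ℕ) :
    (compileBExp B i H).2 = fun n => H (n + anc B) := by
  induction B generalizing i H with
  | bfalse => rfl
  | btrue => rfl
  | var j => rfl
  | bxor a b iha ihb =>
      simp only [compileBExp, anc, iha, ihb]
      funext n; ring_nf
  | band a b iha ihb =>
      simp only [compileBExp, anc, iha, ihb]
      funext n; ring_nf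

lemma applyGate_target_ne (g : Gate) (s : ℕ → Bool) (j : ℕ) (h : g.target ≠ j) :
    applyGate g s j = s j := by
  cases g <;> simp only [applyGate, Gate.target] at * <;>
    exact Function.update_of_ne (fun hh => h hh.symm) _ _

lemma evalCirc_not_mods (C : List Gate) (s : ℕ → Bool) (j : ℕ)
    (h : ∀ g ∈ C, g.target ≠ j) : evalCirc C s j = s j := by
  induction C generalizing s with
  | nil => rfl
  | cons g C ih =>
      simp only [evalCirc]
      rw [ih _ (fun g hg => h g (List.mem_cons_of_mem _ hg)),
        applyGate_target_ne _ _ _ (h g (List.mem_cons_self))]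

lemma eval_congr (B : BExp) (s t : ℕ → Bool) (h : ∀ j ∈ B.vars, s j = t j) :
    B.eval s = B.eval t := by
  induction B with
  | bfalse => rfl
  | btrue => rfl
  | var j => exact h j (by simp [BExp.vars])
  | bxor a b iha ihb =>
      simp only [BExp.eval]
      rw [iha fun j hj => h j (by simp [BExp.vars, hj]),
        ihb fun j hj => h j (by simp [BExp.vars, hj])]
  | band a b iha ihb =>
      simp only [BExp.eval]
      rw [iha fun j hj => h j (by simp [BExp.vars, hj]),
        ihb fun j hj => h j (by simp [BExp.vars, hj])]

lemma applyGate_selfinv (g : Gate) (hg : g.wf) (s : ℕ → Bool) :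
    applyGate g (applyGate g s) = s := by
  cases g with
  | NOT i =>
      funext j
      by_cases hj : j = i
      · subst hj; simp [applyGate]
      · simp [applyGate, Function.update_of_ne hj]
  | CNOT i j =>
      have hij : i ≠ j := hg
      funext k
      by_cases hk : k = j
      · subst hk
        simp [applyGate, Function.update_of_ne hij, Bool.xor_assoc]
      · simp [applyGate, Function.update_of_ne hk]
  | TOF i j k =>
      obtain ⟨hij, hik, hjk⟩ := hg
      funext m
      by_cases hm : m = k
      · subst hm
        simp [applyGate, Function.update_of_ne hik, Function.update_of_ne hjk,
          Bool.xor_assoc]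
      · simp [applyGate, Function.update_of_ne hm]

lemma evalCirc_reverse_inv (C : List Gate) (hw : circWf C) (s : ℕ → Bool) :
    evalCirc C.reverse (evalCirc C s) = s := by
  induction C generalizing s with
  | nil => rfl
  | cons g C ih =>
      simp only [evalCirc, List.reverse_cons, evalCirc_append]
      rw [ih (fun g' hg' => hw g' (List.mem_cons_of_mem _ hg')) (applyGate g s)]
      show applyGate g (applyGate g s) = s
      exact applyGate_selfinv g (hw g (List.mem_cons_self)) s

lemma applyGate_congr_off (g : Gate) (i : ℕ) (hg : i ∉ g.controls)
    (s t : ℕ → Bool) (h : ∀ j, j ≠ i → s j = t j) :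
    ∀ j, j ≠ i → applyGate g s j = applyGate g t j := by
  intro j hj
  cases g with
  | NOT k =>
      by_cases hk : j = k
      · subst hk; simp [applyGate, h j hj]
      · simp [applyGate, Function.update_of_ne hk, h j hj]
  | CNOT c k =>
      have hc : c ≠ i := by simp [Gate.controls] at hg; exact fun e => hg e.symm
      by_cases hk : j = k
      · subst hk; simp [applyGate, h c hc, h j hj]
      · simp [applyGate, Function.update_of_ne hk, h j hj]
  | TOF c d k =>
      have hc : c ≠ i := by
        simp [Gate.controls] at hg; exact fun e => hg.1 e.symm
      have hd : d ≠ i := by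
        simp [Gate.controls] at hg; exact fun e => hg.2 e.symm
      by_cases hk : j = k
      · subst hk; simp [applyGate, h c hc, h d hd, h j hj]
      · simp [applyGate, Function.update_of_ne hk, h j hj]

lemma evalCirc_congr_off (C : List Gate) (i : ℕ)
    (hc : ∀ g ∈ C, i ∉ g.controls) (s t : ℕ → Bool)
    (h : ∀ j, j ≠ i → s j = t j) :
    ∀ j, j ≠ i → evalCirc C s j = evalCirc C t j := by
  induction C generalizing s t with
  | nil => exact h
  | cons g C ih =>
      intro j hj
      simp only [evalCirc]
      exact ih (fun g' hg' => hc g' (List.mem_cons_of_mem _ hg')) _ _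
        (applyGate_congr_off g i (hc g (List.mem_cons_self)) s t h) j hj

lemma uncompute_agree_s12 (C : List Gate) (i : ℕ)
    (hc : ∀ g ∈ C, i ∉ g.controls) (s t : ℕ → Bool)
    (h : ∀ j, j ≠ i → s j = t j) :
    ∀ j, j ≠ i → evalCirc C s j = evalCirc (uncompute C {i}) t j := by
  induction C generalizing s t with
  | nil => exact h
  | cons g C ih =>
      intro j hj
      have hc' : ∀ g' ∈ C, i ∉ g'.controls :=
        fun g' hg' => hc g' (List.mem_cons_of_mem _ hg')
      by_cases hgi : g.target = i
      · have : uncompute (g :: C) {i} = uncompute C {i} := by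
          simp [uncompute, hgi]
        rw [this]
        simp only [evalCirc]
        refine ih hc' _ _ (fun k hk => ?_) j hj
        rw [applyGate_target_ne g s k (by rw [hgi]; exact Ne.symm hk), h k hk]
      · have : uncompute (g :: C) {i} = g :: uncompute C {i} := by
          simp [uncompute, hgi]
        rw [this]
        simp only [evalCirc]
        exact ih hc' _ _
          (applyGate_congr_off g i (hc g (List.mem_cons_self)) s t h) j hj

lemma compile_targets (B : BExp) (i : ℕ) (H : ℕ → ℕ) :
    ∀ g ∈ (compileBExp B i H).1, g.target = i ∨ ∃ n < anc B, g.target = H n := by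
  induction B generalizing i H with
  | bfalse => intro g hg; simp [compileBExp] at hg
  | btrue =>
      intro g hg; simp [compileBExp] at hg; subst hg; left; rfl
  | var j =>
      intro g hg; simp [compileBExp] at hg; subst hg; left; rfl
  | bxor a b iha ihb =>
      intro g hg
      simp only [compileBExp, List.mem_append] at hg
      rcases hg with hg | hg
      · rcases iha i H g hg with h | ⟨n, hn, h⟩
        · exact Or.inl h
        · exact Or.inr ⟨n, by simp [anc]; omega, h⟩
      · rw [compile_snd] at hg
        rcases ihb i _ g hg with h | ⟨n, hn, h⟩
        · exact Or.inl h
        · exact Or.inr ⟨n + anc a, by simp [anc]; omega, h⟩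
  | band a b iha ihb =>
      intro g hg
      simp only [compileBExp, compile_snd, List.mem_append, List.mem_singleton] at hg
      rcases hg with (hg | hg) | hg
      · rcases iha (H 0) _ g hg with h | ⟨n, hn, h⟩
        · exact Or.inr ⟨0, by simp [anc], h⟩
        · exact Or.inr ⟨n + 1, by simp [anc]; omega, h⟩
      · rcases ihb (H (0 + anc a + 1)) _ g hg with h | ⟨n, hn, h⟩
        · exact Or.inr ⟨0 + anc a + 1, by simp [anc], h⟩
        · exact Or.inr ⟨n + 1 + anc a + 1, by simp [anc]; omega, h⟩
      · subst hg; left; rfl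

lemma compile_controls (B : BExp) (i : ℕ) (H : ℕ → ℕ) :
    ∀ g ∈ (compileBExp B i H).1, ∀ c ∈ g.controls,
      c ∈ B.vars ∨ ∃ n < anc B, c = H n := by
  induction B generalizing i H with
  | bfalse => intro g hg; simp [compileBExp] at hg
  | btrue =>
      intro g hg; simp [compileBExp] at hg; subst hg
      intro c hc; simp [Gate.controls] at hc
  | var j =>
      intro g hg; simp [compileBExp] at hg; subst hg
      intro c hc; simp [Gate.controls] at hc; subst hc
      left; simp [BExp.vars]
  | bxor a b iha ihb =>
      intro g hg
      simp only [compileBExp, List.mem_append] at hg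
      intro c hc
      rcases hg with hg | hg
      · rcases iha i H g hg c hc with h | ⟨n, hn, h⟩
        · exact Or.inl (by simp [BExp.vars, h])
        · exact Or.inr ⟨n, by simp [anc]; omega, h⟩
      · rw [compile_snd] at hg
        rcases ihb i _ g hg c hc with h | ⟨n, hn, h⟩
        · exact Or.inl (by simp [BExp.vars, h])
        · exact Or.inr ⟨n + anc a, by simp [anc]; omega, h⟩
  | band a b iha ihb =>
      intro g hg
      simp only [compileBExp, compile_snd, List.mem_append, List.mem_singleton] at hg
      intro c hc
      rcases hg with (hg | hg) | hg
      · rcases iha (H 0) _ g hg c hc with h | ⟨n, hn, h⟩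
        · exact Or.inl (by simp [BExp.vars, h])
        · exact Or.inr ⟨n + 1, by simp [anc]; omega, h⟩
      · rcases ihb (H (0 + anc a + 1)) _ g hg c hc with h | ⟨n, hn, h⟩
        · exact Or.inl (by simp [BExp.vars, h])
        · exact Or.inr ⟨n + 1 + anc a + 1, by simp [anc]; omega, h⟩
      · subst hg
        simp only [Gate.controls, Finset.mem_insert, Finset.mem_singleton] at hc
        rcases hc with hc | hc
        · exact Or.inr ⟨0, by simp [anc], hc⟩
        · exact Or.inr ⟨0 + anc a + 1, by simp [anc], hc⟩

lemma compile_wf (B : BExp) (i : ℕ) (H : ℕ → ℕ)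
    (hinj : Function.Injective H)
    (hHB : ∀ n, H n ∉ B.vars) (hHi : ∀ n, H n ≠ i) (hiB : i ∉ B.vars) :
    circWf (compileBExp B i H).1 := by
  induction B generalizing i H with
  | bfalse => intro g hg; simp [compileBExp] at hg
  | btrue =>
      intro g hg; simp [compileBExp] at hg; subst hg; trivial
  | var j =>
      intro g hg; simp [compileBExp] at hg; subst hg
      exact fun e => hiB (by simp [BExp.vars, ← e])
  | bxor a b iha ihb =>
      have hva : ∀ n, H n ∉ a.vars := fun n hn => hHB n (by simp [BExp.vars, hn])
      have hvb : ∀ n, H n ∉ b.vars := fun n hn => hHB n (by simp [BExp.vars, hn])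
      have hia : i ∉ a.vars := fun hn => hiB (by simp [BExp.vars, hn])
      have hib : i ∉ b.vars := fun hn => hiB (by simp [BExp.vars, hn])
      intro g hg
      simp only [compileBExp, compile_snd, List.mem_append] at hg
      rcases hg with hg | hg
      · exact iha i H hinj hva hHi hia g hg
      · exact ihb i _ (fun x y e => by
            have := hinj e; omega)
          (fun n => hvb _) (fun n => hHi _) hib g hg
  | band a b iha ihb =>
      have hva : ∀ n, H n ∉ a.vars := fun n hn => hHB n (by simp [BExp.vars, hn])
      have hvb : ∀ n, H n ∉ b.vars := fun n hn => hHB n (by simp [BExp.vars, hn])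
      intro g hg
      simp only [compileBExp, compile_snd, List.mem_append, List.mem_singleton] at hg
      rcases hg with (hg | hg) | hg
      · exact iha (H 0) _ (fun x y e => by have := hinj e; omega)
          (fun n => hva _) (fun n e => by have := hinj e; omega)
          (hva 0) g hg
      · exact ihb (H (0 + anc a + 1)) _ (fun x y e => by have := hinj e; omega)
          (fun n => hvb _) (fun n e => by have := hinj e; omega)
          (hvb _) g hg
      · subst hg
        refine ⟨fun e => by have := hinj e; omega, hHi _, hHi _⟩

lemma compile_eval (B : BExp) (i : ℕ) (H : ℕ → ℕ) (s : ℕ → Bool)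
    (hinj : Function.Injective H)
    (hHB : ∀ n, H n ∉ B.vars) (hHi : ∀ n, H n ≠ i) (hiB : i ∉ B.vars)
    (hzero : ∀ n, s (H n) = false) :
    evalCirc (compileBExp B i H).1 s i = xor (s i) (B.eval s) := by
  induction B generalizing i H s with
  | bfalse => simp [compileBExp, evalCirc, BExp.eval]
  | btrue => simp [compileBExp, evalCirc, BExp.eval, applyGate]
  | var j =>
      have hj : j ≠ i := fun e => hiB (by simp [BExp.vars, ← e])
      simp [compileBExp, evalCirc, BExp.eval, applyGate, Bool.xor_comm]
  | bxor a b iha ihb =>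
      have hva : ∀ n, H n ∉ a.vars := fun n hn => hHB n (by simp [BExp.vars, hn])
      have hvb : ∀ n, H n ∉ b.vars := fun n hn => hHB n (by simp [BExp.vars, hn])
      have hia : i ∉ a.vars := fun hn => hiB (by simp [BExp.vars, hn])
      have hib : i ∉ b.vars := fun hn => hiB (by simp [BExp.vars, hn])
      have key : (compileBExp (BExp.bxor a b) i H).1
          = (compileBExp a i H).1 ++ (compileBExp b i (fun n => H (n + anc a))).1 := by
        simp [compileBExp, compile_snd]
      rw [key, evalCirc_append]
      set s1 := evalCirc (compileBExp a i H).1 s with hs1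
      have huntouched : ∀ j, j ≠ i → (∀ n, n < anc a → j ≠ H n) → s1 j = s j := by
        intro j hj hjH
        refine evalCirc_not_mods _ _ _ (fun g hg => ?_)
        rcases compile_targets a i H g hg with h | ⟨n, hn, h⟩
        · exact h ▸ fun e => hj e.symm
        · exact h ▸ fun e => hjH n hn e.symm
      have hz1 : ∀ n, s1 (H (n + anc a)) = false := by
        intro n
        rw [huntouched _ (hHi _) (fun m hm e => by have := hinj e; omega), hzero]
      have hb := ihb i (fun n => H (n + anc a)) s1
        (fun x y e => by have := hinj e; omega)
        (fun n => hvb _) (fun n => hHi _) hib hz1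
      rw [hb]
      rw [show s1 i = xor (s i) (a.eval s) from iha i H s hinj hva hHi hia hzero]
      have hbeval : b.eval s1 = b.eval s := by
        refine eval_congr b s1 s (fun j hj => ?_)
        exact huntouched j (fun e => hib (e ▸ hj)) (fun n _ e => hvb n (e ▸ hj))
      rw [hbeval]
      simp [BExp.eval, Bool.xor_assoc]
  | band a b iha ihb =>
      have hva : ∀ n, H n ∉ a.vars := fun n hn => hHB n (by simp [BExp.vars, hn])
      have hvb : ∀ n, H n ∉ b.vars := fun n hn => hHB n (by simp [BExp.vars, hn])
      have key : (compileBExp (BExp.band a b) i H).1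
          = (compileBExp a (H 0) (fun n => H (n + 1))).1
            ++ (compileBExp b (H (0 + anc a + 1)) (fun n => H (n + 1 + anc a + 1))).1
            ++ [Gate.TOF (H 0) (H (0 + anc a + 1)) i] := by
        simp [compileBExp, compile_snd]
      rw [key, evalCirc_append, evalCirc_append]
      set s1 := evalCirc (compileBExp a (H 0) (fun n => H (n + 1))).1 s with hs1
      set s2 := evalCirc
        (compileBExp b (H (0 + anc a + 1)) (fun n => H (n + 1 + anc a + 1))).1 s1
        with hs2
      have hun1 : ∀ j, j ≠ H 0 → (∀ n, n < anc a → j ≠ H (n + 1)) → s1 j = s j := by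
        intro j hj hjH
        refine evalCirc_not_mods _ _ _ (fun g hg => ?_)
        rcases compile_targets a (H 0) (fun n => H (n + 1)) g hg with h | ⟨n, hn, h⟩
        · exact h ▸ fun e => hj e.symm
        · exact h ▸ fun e => hjH n hn e.symm
      have hun2 : ∀ j, j ≠ H (0 + anc a + 1) →
          (∀ n, n < anc b → j ≠ H (n + 1 + anc a + 1)) → s2 j = s1 j := by
        intro j hj hjH
        refine evalCirc_not_mods _ _ _ (fun g hg => ?_)
        rcases compile_targets b _ _ g hg with h | ⟨n, hn, h⟩
        · exact h ▸ fun e => hj e.symm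
        · exact h ▸ fun e => hjH n hn e.symm
      have ha : s1 (H 0) = a.eval s := by
        have := iha (H 0) (fun n => H (n + 1)) s
          (fun x y e => by have := hinj e; omega)
          (fun n => hva _) (fun n e => by have := hinj e; omega)
          (hva 0) (fun n => hzero _)
        rw [hs1, this, hzero 0, Bool.false_xor]
      have hz1 : ∀ n, s1 (H (n + 1 + anc a + 1)) = false := by
        intro n
        rw [hun1 _ (fun e => by have := hinj e; omega)
          (fun m hm e => by have := hinj e; omega), hzero]
      have hb : s2 (H (0 + anc a + 1)) = b.eval s := by
        have hbe := ihb (H (0 + anc a + 1)) (fun n => H (n + 1 + anc a + 1)) s1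
          (fun x y e => by have := hinj e; omega)
          (fun n => hvb _) (fun n e => by have := hinj e; omega)
          (hvb _) hz1
        rw [hs2, hbe]
        rw [hun1 _ (fun e => by have := hinj e; omega)
          (fun m hm e => by have := hinj e; omega), hzero, Bool.false_xor]
        refine eval_congr b s1 s (fun j hj => ?_)
        exact hun1 j (fun e => hvb 0 (e ▸ hj)) (fun n _ e => hvb (n + 1) (e ▸ hj))
      have ha2 : s2 (H 0) = a.eval s := by
        rw [hun2 _ (fun e => by have := hinj e; omega)
          (fun m hm e => by have := hinj e; omega), ha]
      have hi2 : s2 i = s i := by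
        rw [hun2 _ (Ne.symm (hHi _)) (fun m hm => Ne.symm (hHi _)),
          hun1 _ (Ne.symm (hHi _)) (fun m hm => Ne.symm (hHi _))]
      simp only [evalCirc, applyGate]
      rw [Function.update_self, ha2, hb, hi2]
      simp [BExp.eval, Bool.xor_comm]

theorem compile_with_cleanup (B : BExp) (i : ℕ) (H : ℕ → ℕ) (s : ℕ → Bool)
    (hinj : Function.Injective H)
    (hHB : ∀ n, H n ∉ B.vars) (hHi : ∀ n, H n ≠ i) (hiB : i ∉ B.vars)
    (hzero : ∀ n, s (H n) = false) :
    (∀ j, j ≠ i →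
      evalCirc ((compileBExp B i H).1 ++
        (uncompute (compileBExp B i H).1 {i}).reverse) s j = s j) ∧
    evalCirc ((compileBExp B i H).1 ++
        (uncompute (compileBExp B i H).1 {i}).reverse) s i
      = xor (s i) (B.eval s) ∧
    (∀ n, evalCirc ((compileBExp B i H).1 ++
        (uncompute (compileBExp B i H).1 {i}).reverse) s (H n) = false) := by
  set C := (compileBExp B i H).1 with hC
  set D := uncompute C {i} with hD
  have hcont : ∀ g ∈ C, i ∉ g.controls := by
    intro g hg hc
    rcases compile_controls B i H g hg i hc with h | ⟨n, _, h⟩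
    · exact hiB h
    · exact hHi n h.symm
  have hw : circWf C := compile_wf B i H hinj hHB hHi hiB
  have hDsub : ∀ g ∈ D, g ∈ C := fun g hg => List.mem_of_mem_filter hg
  have hDtgt : ∀ g ∈ D, g.target ≠ i := by
    intro g hg
    have := List.of_mem_filter hg
    simpa using this
  have hwD : circWf D := fun g hg => hw g (hDsub g hg)
  set t := evalCirc C s with ht
  have heq : evalCirc (C ++ D.reverse) s = evalCirc D.reverse t := by
    rw [evalCirc_append]
  have key1 : ∀ j, j ≠ i → t j = evalCirc D s j :=
    fun j hj => uncompute_agree_s12 C i hcont s s (fun _ _ => rfl) j hj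
  have key2 : ∀ j, j ≠ i →
      evalCirc D.reverse t j = evalCirc D.reverse (evalCirc D s) j := by
    refine evalCirc_congr_off D.reverse i (fun g hg => hcont g ?_) _ _ key1
    exact hDsub g (List.mem_reverse.mp hg)
  have key3 : evalCirc D.reverse (evalCirc D s) = s :=
    evalCirc_reverse_inv D hwD s
  have hoff : ∀ j, j ≠ i → evalCirc (C ++ D.reverse) s j = s j := by
    intro j hj
    rw [heq, key2 j hj, key3]
  refine ⟨hoff, ?_, fun n => by rw [hoff _ (hHi n), hzero]⟩
  have hti : evalCirc D.reverse t i = t i := by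
    refine evalCirc_not_mods _ _ _ (fun g hg => hDtgt g (List.mem_reverse.mp hg))
  rw [heq, hti, ht]
  exact compile_eval B i H s hinj hHB hHi hiB hzero
end

section
/- Correctness of XOR-factoring: if factorAs(B, i) = some B', where factorAs attempts to rewrite B as (var i) ⊕ B' with i not occurring in B', then indeed i ∉ vars(B') and for every state s, eval B s = s(i) XOR eval B' s. -/
def factorAs : BExp → ℕ → Option BExp
  | .bfalse, _ => none
  | .btrue, _ => none
  | .var j, i => if j = i then some .bfalse else none
  | .band _ _, _ => none
  | .bxor a b, i =>
    match factorAs a i with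
    | some a' => if i ∈ b.vars then none else some (.bxor a' b)
    | none =>
      match factorAs b i with
      | some b' => if i ∈ a.vars then none else some (.bxor a b')
      | none => none

theorem factorAs_correct (B : BExp) (i : ℕ) (B' : BExp)
    (h : factorAs B i = some B') :
    i ∉ B'.vars ∧ ∀ s : ℕ → Bool, B.eval s = xor (s i) (B'.eval s) := by
  induction B generalizing B' with
  | bfalse => simp [factorAs] at h
  | btrue => simp [factorAs] at h
  | band a b iha ihb => simp [factorAs] at h
  | var j =>
    simp only [factorAs] at h
    split at h
    · cases h
      subst_vars
      exact ⟨by simp [BExp.vars], fun s => by simp [BExp.eval]⟩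
    · cases h
  | bxor a b iha ihb =>
    simp only [factorAs] at h
    split at h
    next a' ha =>
      split at h
      · cases h
      next hib =>
        cases h
        obtain ⟨h1, h2⟩ := iha a' ha
        refine ⟨by simp [BExp.vars, h1, hib], fun s => ?_⟩
        simp [BExp.eval, h2 s, Bool.xor_assoc]
    next hna =>
      split at h
      next b' hb =>
        split at h
        · cases h
        next hia =>
          cases h
          obtain ⟨h1, h2⟩ := ihb b' hb
          refine ⟨by simp [BExp.vars, h1, hia], fun s => ?_⟩
          simp [BExp.eval, h2 s]
          cases s i <;> cases a.eval s <;> cases b'.eval s <;> simp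
      next => cases h
end

section
/- Distribution to ESOP form preserves semantics: the function dist that recursively rewrites Boolean expressions by distributing AND over XOR (e.g., (a ⊕ b) ∧ c ↦ (a ∧ c) ⊕ (b ∧ c) and (a ⊕ b) ∧ (c ⊕ d) ↦ (a∧c) ⊕ (a∧d) ⊕ (b∧c) ⊕ (b∧d)) satisfies eval (dist B) s = eval B s for all B and all states s. -/
def dist : BExp → BExp
  | .bxor a b => .bxor (dist a) (dist b)
  | .band a b =>
    match dist a, dist b with
    | .bxor a1 a2, .bxor b1 b2 =>
        .bxor (.bxor (.band a1 b1) (.band a1 b2))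
              (.bxor (.band a2 b1) (.band a2 b2))
    | .bxor a1 a2, b' => .bxor (.band a1 b') (.band a2 b')
    | a', .bxor b1 b2 => .bxor (.band a' b1) (.band a' b2)
    | a', b' => .band a' b'
  | e => e

theorem dist_preserves_semantics (B : BExp) (s : ℕ → Bool) :
    (dist B).eval s = B.eval s := by
  induction B with
  | bfalse => rfl
  | btrue => rfl
  | var i => rfl
  | bxor a b ha hb => simp [_root_.dist, BExp.eval, ha, hb]
  | band a b ha hb =>
    rcases h1 : dist a with _|_|i|⟨a1,a2⟩|⟨a1,a2⟩ <;>
    rcases h2 : dist b with _|_|j|⟨b1,b2⟩|⟨b1,b2⟩ <;>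
    rw [h1] at ha <;> rw [h2] at hb <;>
    simp only [_root_.dist, h1, h2] <;>
    simp [BExp.eval, ← ha, ← hb, Bool.and_xor_distrib_left, Bool.and_xor_distrib_right]
     <;>
    (try (cases a1.eval s <;> cases a2.eval s <;> cases b1.eval s <;> cases b2.eval s <;> rfl))
end
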